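/- For every integer n ≥ 2, every γ > 0 with γ ≠ 1, and every p ∈ (0,1): β_{n,γ}(p) < p^γ if 0 < γ < 1, and β_{n,γ}(p) > p^γ if γ > 1. -/

import Mathlib

open MeasureTheory Real Finset

/-- `theta n γ p = E[(n/N(p))^{1-γ}]` where `N(p)-1 ~ Bin(n-1,p)`. -/
noncomputable def theta (n : ℕ) (γ p : ℝ) : ℝ :=
  ∑ k ∈ Finset.range n,
    ((n - 1).choose k : ℝ) * p ^ k * (1 - p) ^ (n - 1 - k) *
      ((n : ℝ) / ((k : ℝ) + 1)) ^ (1 - γ)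

/-- `beta n γ p = p * theta n γ p`. -/
noncomputable def beta (n : ℕ) (γ p : ℝ) : ℝ := p * theta n γ p

/-- Optimal tontine payout function. -/
noncomputable def Dopt (n : ℕ) (γ r : ℝ) (p : ℝ → ℝ) (t : ℝ) : ℝ :=
  beta n γ (p t) ^ (1 / γ) /
    ∫ s in Set.Ioi (0 : ℝ), Real.exp (-r * s) * beta n γ (p s) ^ (1 / γ)

/-- Cumulative discounted payout of the optimal tontine. -/
noncomputable def Delta (n : ℕ) (γ r : ℝ) (p : ℝ → ℝ) (t : ℝ) : ℝ :=
  ∫ s in (0 : ℝ)..t, Real.exp (-r * s) * Dopt n γ r p s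

lemma convexOn_rpow_of_nonpos {c : ℝ} (hc : c ≤ 0) :
    ConvexOn ℝ (Set.Ioi (0:ℝ)) fun x : ℝ => x ^ c := by
  have himg : Real.log '' Set.Ioi (0:ℝ) = Set.univ := by
    apply Set.eq_univ_of_forall
    intro y
    exact ⟨Real.exp y, Real.exp_pos y, Real.log_exp y⟩
  have hexp : ConvexOn ℝ Set.univ (fun y : ℝ => Real.exp (c * y)) := by
    refine ⟨convex_univ, fun x _ y _ a b ha hb hab => ?_⟩
    have h := convexOn_exp.2 (Set.mem_univ (c*x)) (Set.mem_univ (c*y)) ha hb hab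
    simp only [smul_eq_mul] at h ⊢
    convert h using 2
    ring
  have hanti : AntitoneOn (fun y : ℝ => Real.exp (c * y)) (Real.log '' Set.Ioi (0:ℝ)) := by
    intro a _ b _ hab
    exact Real.exp_le_exp.2 (mul_le_mul_of_nonpos_left hab hc)
  have hcomp : ConvexOn ℝ (Set.Ioi (0:ℝ)) ((fun y : ℝ => Real.exp (c * y)) ∘ Real.log) :=
    ConvexOn.comp_concaveOn (by rw [himg]; exact hexp)
      strictConcaveOn_log_Ioi.concaveOn hanti
  refine ⟨convex_Ioi 0, fun x hx y hy a b ha hb hab => ?_⟩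
  have hxy : (0:ℝ) < a • x + b • y := (convex_Ioi (0:ℝ)) hx hy ha hb hab
  have h := hcomp.2 hx hy ha hb hab
  simp only [Function.comp] at h
  have e1 : ∀ t : ℝ, 0 < t → t ^ c = Real.exp (c * Real.log t) := fun t ht => by
    rw [Real.rpow_def_of_pos ht, mul_comm]
  simp only []
  rw [e1 _ hxy, e1 _ hx, e1 _ hy]
  exact h

/-- for `0 < p < 1`, `β_{n,γ}(p) < p^γ` when `0 < γ < 1`, and
`β_{n,γ}(p) > p^γ` when `γ > 1`. -/
theorem beta_vs_p_rpow
    (n : ℕ) (hn : 2 ≤ n) (γ : ℝ) (hγ : 0 < γ) (hγ1 : γ ≠ 1)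
    (p : ℝ) (hp : p ∈ Set.Ioo (0 : ℝ) 1) :
    (γ < 1 → beta n γ p < p ^ γ) ∧ (1 < γ → p ^ γ < beta n γ p) := by
  obtain ⟨hp0, hp1⟩ := hp
  have hn0 : 0 < n := by omega
  have hnR : (0:ℝ) < n := by exact_mod_cast hn0
  have hq0 : (0:ℝ) < 1 - p := by linarith
  set w : ℕ → ℝ := fun k => ((n - 1).choose k : ℝ) * p ^ k * (1 - p) ^ (n - 1 - k) with hwdef
  set z : ℕ → ℝ := fun k => (n : ℝ) / ((k : ℝ) + 1) with hzdef
  have hw0 : ∀ k ∈ Finset.range n, 0 ≤ w k := by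
    intro k _
    have : (0:ℝ) ≤ ((n-1).choose k : ℝ) := by positivity
    positivity
  have hn1 : n - 1 + 1 = n := by omega
  have hw1 : ∑ k ∈ Finset.range n, w k = 1 := by
    have h := add_pow p (1 - p) (n - 1)
    rw [hn1, show p + (1 - p) = 1 by ring, one_pow] at h
    rw [show (∑ k ∈ Finset.range n, w k)
        = ∑ k ∈ Finset.range n, p ^ k * (1 - p) ^ (n - 1 - k) * ((n-1).choose k : ℝ) from
      Finset.sum_congr rfl fun k _ => by rw [hwdef]; ring]
    exact h.symm
  have hzpos : ∀ k : ℕ, 0 < z k := by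
    intro k
    have : (0:ℝ) < (k:ℝ) + 1 := by positivity
    exact div_pos hnR this
  set S : ℝ := ∑ k ∈ Finset.range n, w k * z k with hSdef
  have hpS : p * S = 1 - (1 - p) ^ n := by
    have key : ∀ k ∈ Finset.range n, p * (w k * z k)
        = p ^ (k+1) * (1 - p) ^ (n - (k+1)) * ((n.choose (k+1) : ℝ)) := by
      intro k _
      have hnat : n * (n - 1).choose k = n.choose (k + 1) * (k + 1) := by
        have h := Nat.add_one_mul_choose_eq (n - 1) k
        rwa [show n - 1 + 1 = n by omega] at h
      have hcast : (n : ℝ) * ((n - 1).choose k : ℝ) = (n.choose (k+1) : ℝ) * ((k:ℝ) + 1) := by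
        exact_mod_cast congrArg (Nat.cast (R := ℝ)) hnat
      have hsub : n - 1 - k = n - (k + 1) := by omega
      have hk1 : ((k:ℝ) + 1) ≠ 0 := by positivity
      show p * (((n - 1).choose k : ℝ) * p ^ k * (1 - p) ^ (n - 1 - k) * ((n:ℝ) / ((k:ℝ) + 1)))
          = p ^ (k+1) * (1 - p) ^ (n - (k+1)) * (n.choose (k+1) : ℝ)
      rw [hsub]
      rw [(eq_div_iff hk1).mpr hcast.symm]
      ring
    have h := add_pow p (1 - p) n
    rw [show p + (1 - p) = 1 by ring, one_pow,
      Finset.sum_range_succ' (fun i => p ^ i * (1 - p) ^ (n - i) * (n.choose i : ℝ)) n] at h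
    simp only [pow_zero, Nat.sub_zero, Nat.choose_zero_right, Nat.cast_one, one_mul, mul_one] at h
    calc p * S = ∑ k ∈ Finset.range n, p * (w k * z k) := by rw [hSdef, Finset.mul_sum]
      _ = ∑ k ∈ Finset.range n, p ^ (k+1) * (1 - p) ^ (n - (k+1)) * ((n.choose (k+1) : ℝ)) :=
          Finset.sum_congr rfl key
      _ = 1 - (1 - p) ^ n := by linarith [h]
  have hq1 : (1 - p) ^ n < 1 := pow_lt_one₀ hq0.le (by linarith) (by omega)
  have hqpos : 0 < (1 - p) ^ n := pow_pos hq0 n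
  have hSval : S = (1 - (1 - p) ^ n) / p := by
    field_simp
    linarith [hpS]
  have hSpos : 0 < S := hSval ▸ div_pos (by linarith) hp0
  have hSlt : S < 1 / p := by
    rw [hSval, div_lt_div_iff₀ hp0 hp0]
    nlinarith
  have hsum_smul : ∑ k ∈ Finset.range n, w k • z k = S := by
    simp [hSdef, smul_eq_mul]
  have htheta : theta n γ p = ∑ k ∈ Finset.range n, w k * (z k) ^ (1 - γ) := rfl
  have hpow_key : p * (1/p) ^ (1 - γ) = p ^ γ := by
    have h1 : (p⁻¹) ^ (1 - γ) = p ^ (γ - 1) := by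
      rw [← Real.rpow_neg_one p, ← Real.rpow_mul hp0.le,
        show (-1:ℝ) * (1 - γ) = γ - 1 by ring]
    rw [one_div, h1]
    calc p * p ^ (γ - 1) = p ^ (1:ℝ) * p ^ (γ - 1) := by rw [Real.rpow_one]
      _ = p ^ (1 + (γ - 1)) := (Real.rpow_add hp0 1 (γ - 1)).symm
      _ = p ^ γ := by ring_nf
  constructor
  · intro hγlt
    have hc0 : (0:ℝ) ≤ 1 - γ := by linarith
    have hc1 : (1:ℝ) - γ ≤ 1 := by linarith
    have hje := (Real.concaveOn_rpow hc0 hc1).le_map_sum hw0 hw1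
      (fun k _ => (hzpos k).le)
    simp only [smul_eq_mul] at hje
    rw [show ∑ k ∈ Finset.range n, w k * z k = S from rfl] at hje
    have hθ : theta n γ p ≤ S ^ (1 - γ) := by rw [htheta]; exact hje
    have hlt : S ^ (1 - γ) < (1/p) ^ (1 - γ) :=
      Real.rpow_lt_rpow hSpos.le hSlt (by linarith)
    calc beta n γ p = p * theta n γ p := rfl
      _ ≤ p * S ^ (1 - γ) := by nlinarith
      _ < p * (1/p) ^ (1 - γ) := by nlinarith
      _ = p ^ γ := hpow_key
  · intro hγgt
    have hc : (1:ℝ) - γ ≤ 0 := by linarith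
    have hje := (convexOn_rpow_of_nonpos hc).map_sum_le hw0 hw1
      (fun k _ => hzpos k)
    simp only [smul_eq_mul] at hje
    have hθ : S ^ (1 - γ) ≤ theta n γ p := by rw [htheta]; exact hje
    have hlt : (1/p) ^ (1 - γ) < S ^ (1 - γ) :=
      Real.rpow_lt_rpow_of_neg hSpos hSlt (by linarith)
    calc p ^ γ = p * (1/p) ^ (1 - γ) := hpow_key.symm
      _ < p * S ^ (1 - γ) := by nlinarith
      _ ≤ p * theta n γ p := by nlinarith
      _ = beta n γ p := rfl
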